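/- Let F : H → H be continuous on a real Hilbert space and satisfy the coercivity condition ⟪u, F u⟫/‖u‖ → ∞ as ‖u‖ → ∞. Suppose for each a ∈ (0,1) the element u_a solves F(u_a) + a u_a = h. Then sup_{0<a<1} ‖u_a‖ < ∞. -/

import Mathlib

theorem stmt_13 {H : Type*} [NormedAddCommGroup H] [InnerProductSpace ℝ H] [CompleteSpace H]
    (F : H → H) (hc : Continuous F) (h : H)
    (hcoer : ∀ M : ℝ, ∃ R : ℝ, ∀ u : H, ‖u‖ ≥ R → (inner ℝ u (F u) : ℝ) / ‖u‖ ≥ M)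
    (u : ℝ → H) (hu : ∀ a : ℝ, a ∈ Set.Ioo (0 : ℝ) 1 → F (u a) + a • u a = h) :
    ∃ c : ℝ, ∀ a : ℝ, a ∈ Set.Ioo (0 : ℝ) 1 → ‖u a‖ ≤ c := by
  obtain ⟨R, hR⟩ := hcoer ‖h‖
  refine ⟨max R 1, fun a ha => ?_⟩
  by_contra hgt
  push_neg at hgt
  set v := u a with hv
  have hvR : ‖v‖ ≥ R := le_of_lt (lt_of_le_of_lt (le_max_left _ _) hgt)
  have hv1 : (1 : ℝ) < ‖v‖ := lt_of_le_of_lt (le_max_right _ _) hgt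
  have hvpos : (0 : ℝ) < ‖v‖ := lt_trans one_pos hv1
  have hdiv := hR v hvR
  have hinner : (inner ℝ v (F v) : ℝ) ≥ ‖h‖ * ‖v‖ := by
    calc ‖h‖ * ‖v‖ ≤ ((inner ℝ v (F v) : ℝ) / ‖v‖) * ‖v‖ := by
          exact mul_le_mul_of_nonneg_right hdiv (le_of_lt hvpos)
      _ = (inner ℝ v (F v) : ℝ) := div_mul_cancel₀ _ (ne_of_gt hvpos)
  have heq := hu a ha
  have h2 : (inner ℝ v (F v) : ℝ) + a * ‖v‖ ^ 2 = inner ℝ v h := by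
    have := congrArg (fun w => (inner ℝ v w : ℝ)) heq
    simpa [← hv, inner_add_right, real_inner_smul_right, real_inner_self_eq_norm_sq,
      mul_comm] using this
  have h3 : (inner ℝ v h : ℝ) ≤ ‖v‖ * ‖h‖ := real_inner_le_norm v h
  have hapos : 0 < a := ha.1
  nlinarith [sq_nonneg ‖v‖, mul_pos hapos (mul_pos hvpos hvpos)]
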